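/- The 4×4 Hermitian matrix H = [[2I, C], [-C, 2I]] with C = (2i/√3)·[[1,1],[1,-1]] is positive definite, has determinant (2/(i√3))⁴ = 16/9, and satisfies x̄ᵀHx ∈ 2Z for all x ∈ O⁴, where O = Z[ω], ω = (1+i√3)/2. -/

import Mathlib

open Matrix Complex ComplexOrder

/-- `ω = (1 + i√3)/2`, a primitive sixth root of unity. -/
noncomputable def omegaE : ℂ := (1 + Complex.I * Real.sqrt 3) / 2

/-- Membership in the ring of Eisenstein integers `𝒪 = ℤ + ℤω`. -/
def IsEisensteinInt (z : ℂ) : Prop := ∃ a b : ℤ, z = (a : ℂ) + (b : ℂ) * omegaE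

lemma sqrt3_sq : ((Real.sqrt 3 : ℝ) : ℂ) ^ 2 = 3 := by
  norm_cast
  rw [Real.sq_sqrt] ; norm_num

lemma sqrt3_ne : ((Real.sqrt 3 : ℝ) : ℂ) ≠ 0 := by
  simp only [ne_eq, Complex.ofReal_eq_zero]
  positivity

lemma omegaE_sq : omegaE ^ 2 = omegaE - 1 := by
  unfold omegaE
  linear_combination (Complex.I ^ 2 / 4) * sqrt3_sq + (3 / 4) * Complex.I_sq

lemma omegaE_conj : (starRingEnd ℂ) omegaE = 1 - omegaE := by
  unfold omegaE
  simp only [map_div₀, map_add, _root_.map_one, _root_.map_mul, Complex.conj_I,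
    Complex.conj_ofReal, map_ofNat]
  ring

lemma c_eq : (2 * Complex.I / Real.sqrt 3 : ℂ) = (4 * omegaE - 2) / 3 := by
  unfold omegaE
  rw [div_eq_div_iff sqrt3_ne (by norm_num)]
  linear_combination (-2 * Complex.I) * sqrt3_sq

/-- The 4×4 Hermitian matrix `H = [[2I, C], [-C, 2I]]` with `C = (2i/√3)·[[1,1],[1,-1]]`
is positive definite, has determinant `(2/(i√3))⁴ = 16/9`, and takes even integer values
`x̄ᵀHx ∈ 2ℤ` on `𝒪⁴`. -/
theorem stmt_11 :
    let c : ℂ := 2 * Complex.I / Real.sqrt 3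
    let H : Matrix (Fin 4) (Fin 4) ℂ :=
      !![2, 0, c, c; 0, 2, c, -c; -c, -c, 2, 0; -c, c, 0, 2]
    H.PosDef ∧ H.det = 16 / 9 ∧
      ∀ x : Fin 4 → ℂ, (∀ i, IsEisensteinInt (x i)) →
        ∃ k : ℤ, star x ⬝ᵥ H.mulVec x = 2 * (k : ℂ) := by
  intro c H
  have hc : c = (4 * omegaE - 2) / 3 := c_eq
  have hcc : (starRingEnd ℂ) c = -c := by
    rw [hc]
    simp only [map_div₀, map_sub, _root_.map_mul, map_ofNat, omegaE_conj]
    ring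
  have hc2 : c ^ 2 + 4 / 3 = (16 / 9) * (omegaE ^ 2 - (omegaE - 1)) := by
    rw [hc]; ring
  have hH : H = !![2, 0, c, c; 0, 2, c, -c; -c, -c, 2, 0; -c, c, 0, 2] := rfl
  refine ⟨posDef_iff_dotProduct_mulVec.mpr ⟨?_, ?_⟩, ?_, ?_⟩
  · -- Hermitian
    rw [Matrix.IsHermitian, hH]
    ext i j
    rw [Matrix.conjTranspose_apply]
    fin_cases i <;> fin_cases j <;>
      simp [hcc, Matrix.vecHead, Matrix.vecTail]
  · -- positive definiteness
    intro x hx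
    have key : star x ⬝ᵥ H.mulVec x =
        ((1/2 * Complex.normSq (2 * x 0 + c * (x 2 + x 3))
          + 1/2 * Complex.normSq (2 * x 1 + c * (x 2 - x 3))
          + 2/3 * (Complex.normSq (x 2) + Complex.normSq (x 3)) : ℝ) : ℂ) := by
      push_cast [← Complex.mul_conj]
      rw [hH]
      simp only [dotProduct, Matrix.mulVec, Fin.sum_univ_four, Pi.star_apply,
        Complex.star_def, Matrix.cons_val', Matrix.cons_val_zero, Matrix.cons_val_one,
        Matrix.head_cons, Matrix.empty_val', Matrix.cons_val_fin_one, Matrix.head_fin_const,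
        Matrix.of_apply, Matrix.cons_val_two, Matrix.cons_val_three, Matrix.tail_cons,
        map_add, _root_.map_mul, map_sub, map_ofNat, hcc]
      linear_combination (x 2 * (starRingEnd ℂ) (x 2) + x 3 * (starRingEnd ℂ) (x 3)) * hc2
        + (16 / 9 * (x 2 * (starRingEnd ℂ) (x 2) + x 3 * (starRingEnd ℂ) (x 3))) * omegaE_sq
    rw [key]
    rw [Complex.zero_lt_real]
    have n1 : 0 ≤ Complex.normSq (2 * x 0 + c * (x 2 + x 3)) := Complex.normSq_nonneg _
    have n2 : 0 ≤ Complex.normSq (2 * x 1 + c * (x 2 - x 3)) := Complex.normSq_nonneg _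
    have n3 : 0 ≤ Complex.normSq (x 2) := Complex.normSq_nonneg _
    have n4 : 0 ≤ Complex.normSq (x 3) := Complex.normSq_nonneg _
    by_cases h2 : x 2 = 0
    · by_cases h3 : x 3 = 0
      · have h01 : x 0 ≠ 0 ∨ x 1 ≠ 0 := by
          by_contra hcon
          push_neg at hcon
          exact hx (funext fun i => by fin_cases i <;> simp [hcon.1, hcon.2, h2, h3])
        rcases h01 with h0 | h1
        · have hp : 0 < Complex.normSq (2 * x 0 + c * (x 2 + x 3)) := by
            rw [h2, h3, show (2 : ℂ) * x 0 + c * (0 + 0) = 2 * x 0 by ring]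
            exact Complex.normSq_pos.mpr (mul_ne_zero two_ne_zero h0)
          nlinarith
        · have hp : 0 < Complex.normSq (2 * x 1 + c * (x 2 - x 3)) := by
            rw [h2, h3, show (2 : ℂ) * x 1 + c * (0 - 0) = 2 * x 1 by ring]
            exact Complex.normSq_pos.mpr (mul_ne_zero two_ne_zero h1)
          nlinarith
      · have hp : 0 < Complex.normSq (x 3) := Complex.normSq_pos.mpr h3
        nlinarith
    · have hp : 0 < Complex.normSq (x 2) := Complex.normSq_pos.mpr h2
      nlinarith
  · -- determinant
    rw [hH, hc]
    simp [Matrix.det_succ_row_zero, Fin.sum_univ_succ, show Fin.succAbove (2:Fin 4) 2 = 3 from rfl,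
      show Fin.succAbove (3:Fin 4) 2 = 2 from rfl]
    linear_combination ((16 / 9) * (4 * ((4 * omegaE - 2) / 3) ^ 2 + 32 / 3)) * omegaE_sq
  · -- even integer values on the Eisenstein lattice
    intro x hx
    obtain ⟨a0, b0, e0⟩ := hx 0
    obtain ⟨a1, b1, e1⟩ := hx 1
    obtain ⟨a2, b2, e2⟩ := hx 2
    obtain ⟨a3, b3, e3⟩ := hx 3
    refine ⟨a0^2 + a0*b0 + b0^2 + a1^2 + a1*b1 + b1^2 + a2^2 + a2*b2 + b2^2
      + a3^2 + a3*b3 + b3^2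
      - (a0*b2 - a2*b0) - (a0*b3 - a3*b0) - (a1*b2 - a2*b1) + (a1*b3 - a3*b1), ?_⟩
    rw [hH]
    simp only [dotProduct, Matrix.mulVec, Fin.sum_univ_four, Pi.star_apply,
      Complex.star_def, Matrix.cons_val', Matrix.cons_val_zero, Matrix.cons_val_one,
      Matrix.head_cons, Matrix.empty_val', Matrix.cons_val_fin_one, Matrix.head_fin_const,
      Matrix.of_apply, Matrix.cons_val_two, Matrix.cons_val_three, Matrix.tail_cons,
      e0, e1, e2, e3, map_add, _root_.map_mul, map_intCast, omegaE_conj, hc]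
    push_cast
    linear_combination (-2*(b0:ℂ)^2 - 2*(b1:ℂ)^2 - 2*(b2:ℂ)^2 - 2*(b3:ℂ)^2
      + (8/3)*(a3:ℂ)*(b1:ℂ) - (8/3)*(a3:ℂ)*(b0:ℂ) - (8/3)*(a2:ℂ)*(b1:ℂ)
      - (8/3)*(a2:ℂ)*(b0:ℂ) - (8/3)*(a1:ℂ)*(b3:ℂ) + (8/3)*(a1:ℂ)*(b2:ℂ)
      + (8/3)*(a0:ℂ)*(b3:ℂ) + (8/3)*(a0:ℂ)*(b2:ℂ)) * omegaE_sq
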